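/- Let V be a finite-dimensional real inner product space, b ∈ V with ‖b‖ = 1, g ∈ ℝ with |g| < 2, h = √(1 − g²/4), and let q, A, B, λ be as in the Finsleroid setting. Then for y₁ with q(y₁) > 0 and nonzero y₂, the derivative of y ↦ λ(y, y₂) at y₁ applied to the vector y₁ itself is zero; symmetrically, for y₂ with q(y₂) > 0 and nonzero y₁, the derivative of y ↦ λ(y₁, y) at y₂ applied to y₂ is zero. -/

import Mathlib

open scoped InnerProductSpace

private lemma aux_homog_fderiv {V : Type*} [NormedAddCommGroup V] [InnerProductSpace ℝ V]
    (f : V → ℝ) (y : V) (hf : ∀ t : ℝ, 0 < t → f (t • y) = f y) :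
    fderiv ℝ f y y = 0 := by
  by_cases hd : DifferentiableAt ℝ f y
  · have hc : HasDerivAt (fun t : ℝ => t • y) y 1 := by
      simpa using (hasDerivAt_id (1 : ℝ)).smul_const y
    have h1 : HasDerivAt (fun t : ℝ => f (t • y)) (fderiv ℝ f y y) 1 := by
      have hf' : HasFDerivAt f (fderiv ℝ f y) ((1 : ℝ) • y) := by
        rw [one_smul]; exact hd.hasFDerivAt
    -- compose
      exact hf'.comp_hasDerivAt 1 hc
    have hconst : (fun t : ℝ => f (t • y)) =ᶠ[nhds (1 : ℝ)] fun _ => f y := by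
      filter_upwards [Ioi_mem_nhds (by norm_num : (0 : ℝ) < 1)] with t ht
      exact hf t ht
    have h2 : HasDerivAt (fun t : ℝ => f (t • y)) 0 1 :=
      (hasDerivAt_const (1 : ℝ) (f y)).congr_of_eventuallyEq hconst
    exact h1.unique h2
  · rw [fderiv_zero_of_not_differentiableAt hd]; rfl

theorem finsleroid_lambda_euler_contractions
    {V : Type*} [NormedAddCommGroup V] [InnerProductSpace ℝ V] [FiniteDimensional ℝ V]
    (b : V) (hb : ‖b‖ = 1) (g h : ℝ) (hg : |g| < 2)
    (hh : h = Real.sqrt (1 - g ^ 2 / 4))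
    (q A B : V → ℝ) (lam : V → V → ℝ)
    (hq : ∀ y : V, q y = Real.sqrt (‖y‖ ^ 2 - ⟪b, y⟫_ℝ ^ 2))
    (hA : ∀ y : V, A y = ⟪b, y⟫_ℝ + (g / 2) * q y)
    (hB : ∀ y : V, B y = ⟪b, y⟫_ℝ ^ 2 + g * ⟪b, y⟫_ℝ * q y + q y ^ 2)
    (hlam : ∀ y₁ y₂ : V, y₁ ≠ 0 → y₂ ≠ 0 →
      lam y₁ y₂ = (A y₁ * A y₂ + h ^ 2 * (⟪y₁, y₂⟫_ℝ - ⟪b, y₁⟫_ℝ * ⟪b, y₂⟫_ℝ))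
        / Real.sqrt (B y₁ * B y₂)) :
    (∀ y₁ y₂ : V, 0 < q y₁ → y₂ ≠ 0 → fderiv ℝ (fun y => lam y y₂) y₁ y₁ = 0)
      ∧ (∀ y₁ y₂ : V, y₁ ≠ 0 → 0 < q y₂ → fderiv ℝ (fun y => lam y₁ y) y₂ y₂ = 0) := by
  -- basic scaling facts
  have hqpos_ne : ∀ y : V, 0 < q y → y ≠ 0 := by
    intro y hy hy0
    rw [hy0, hq] at hy
    simp at hy
  have hqsc : ∀ (t : ℝ) (y : V), 0 < t → q (t • y) = t * q y := by
    intro t y ht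
    rw [hq, hq]
    have : ‖t • y‖ ^ 2 - ⟪b, t • y⟫_ℝ ^ 2 = t ^ 2 * (‖y‖ ^ 2 - ⟪b, y⟫_ℝ ^ 2) := by
      rw [norm_smul, real_inner_smul_right, Real.norm_eq_abs]
      rw [mul_pow, sq_abs]; ring
    rw [this, Real.sqrt_mul (sq_nonneg t), Real.sqrt_sq ht.le]
  have hAsc : ∀ (t : ℝ) (y : V), 0 < t → A (t • y) = t * A y := by
    intro t y ht
    rw [hA, hA, hqsc t y ht, real_inner_smul_right]; ring
  have hBsc : ∀ (t : ℝ) (y : V), 0 < t → B (t • y) = t ^ 2 * B y := by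
    intro t y ht
    rw [hB, hB, hqsc t y ht, real_inner_smul_right]; ring
  have hlamsc1 : ∀ (t : ℝ) (y₁ y₂ : V), 0 < t → y₁ ≠ 0 → y₂ ≠ 0 →
      lam (t • y₁) y₂ = lam y₁ y₂ := by
    intro t y₁ y₂ ht h1 h2
    have hty : t • y₁ ≠ 0 := smul_ne_zero (ne_of_gt ht) h1
    rw [hlam _ _ hty h2, hlam _ _ h1 h2, hAsc t y₁ ht, hBsc t y₁ ht,
      real_inner_smul_left]
    have hnum : t * A y₁ * A y₂ + h ^ 2 * (t * ⟪y₁, y₂⟫_ℝ - ⟪b, t • y₁⟫_ℝ * ⟪b, y₂⟫_ℝ)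
        = t * (A y₁ * A y₂ + h ^ 2 * (⟪y₁, y₂⟫_ℝ - ⟪b, y₁⟫_ℝ * ⟪b, y₂⟫_ℝ)) := by
      rw [real_inner_smul_right]; ring
    have hden : Real.sqrt (t ^ 2 * B y₁ * B y₂) = t * Real.sqrt (B y₁ * B y₂) := by
      rw [mul_assoc, Real.sqrt_mul (sq_nonneg t), Real.sqrt_sq ht.le]
    rw [hnum, hden, mul_div_mul_left _ _ (ne_of_gt ht)]
  have hlamsc2 : ∀ (t : ℝ) (y₁ y₂ : V), 0 < t → y₁ ≠ 0 → y₂ ≠ 0 →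
      lam y₁ (t • y₂) = lam y₁ y₂ := by
    intro t y₁ y₂ ht h1 h2
    have hty : t • y₂ ≠ 0 := smul_ne_zero (ne_of_gt ht) h2
    rw [hlam _ _ h1 hty, hlam _ _ h1 h2, hAsc t y₂ ht, hBsc t y₂ ht]
    have hnum : A y₁ * (t * A y₂) + h ^ 2 * (⟪y₁, t • y₂⟫_ℝ - ⟪b, y₁⟫_ℝ * ⟪b, t • y₂⟫_ℝ)
        = t * (A y₁ * A y₂ + h ^ 2 * (⟪y₁, y₂⟫_ℝ - ⟪b, y₁⟫_ℝ * ⟪b, y₂⟫_ℝ)) := by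
      rw [real_inner_smul_right, real_inner_smul_right]; ring
    have hden : Real.sqrt (B y₁ * (t ^ 2 * B y₂)) = t * Real.sqrt (B y₁ * B y₂) := by
      rw [show B y₁ * (t ^ 2 * B y₂) = t ^ 2 * (B y₁ * B y₂) by ring,
        Real.sqrt_mul (sq_nonneg t), Real.sqrt_sq ht.le]
    rw [hnum, hden, mul_div_mul_left _ _ (ne_of_gt ht)]
  constructor
  · intro y₁ y₂ hq1 h2
    exact aux_homog_fderiv (fun y => lam y y₂) y₁
      (fun t ht => hlamsc1 t y₁ y₂ ht (hqpos_ne y₁ hq1) h2)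
  · intro y₁ y₂ h1 hq2
    exact aux_homog_fderiv (fun y => lam y₁ y) y₂
      (fun t ht => hlamsc2 t y₁ y₂ ht h1 (hqpos_ne y₂ hq2))
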